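/- Let R be a commutative artinian principal ideal ring and M a finitely generated R-module. Then M is isomorphic as an R-module to Hom_R(M, R). -/

import Mathlib

open Submodule IsLocalRing

universe u

section LocalLemmas

variable {R : Type u} [CommRing R] [IsLocalRing R] {t : R} {n : ℕ}

lemma unit_decomp (ht : maximalIdeal R = Ideal.span {t}) (hn : t ^ n = 0)
    {c : R} (hc : c ≠ 0) : ∃ (i : ℕ) (u : R), i ≤ n ∧ IsUnit u ∧ c = t ^ i * u := by
  have hex : ∃ i, ¬ t ^ (i + 1) ∣ c := by
    refine ⟨n, ?_⟩
    rw [pow_succ, hn, zero_mul, zero_dvd_iff]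
    exact hc
  classical
  let i := Nat.find hex
  have hspec : ¬ t ^ (i + 1) ∣ c := Nat.find_spec hex
  have hile : i ≤ n := by
    apply Nat.find_le
    rw [pow_succ, hn, zero_mul, zero_dvd_iff]
    exact hc
  have hdvd : t ^ i ∣ c := by
    rcases Nat.eq_zero_or_pos i with h0 | hpos
    · rw [h0, pow_zero]; exact one_dvd _
    · have := Nat.find_min hex (m := i - 1) (by omega)
      push_neg at this
      simpa [Nat.sub_add_cancel hpos] using this
  obtain ⟨u, hu⟩ := hdvd
  refine ⟨i, u, hile, ?_, hu⟩
  by_contra hnu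
  have hum : u ∈ maximalIdeal R := hnu
  rw [ht, Ideal.mem_span_singleton] at hum
  obtain ⟨v, hv⟩ := hum
  exact hspec ⟨v, by rw [hu, hv, pow_succ]; ring⟩

lemma ann_iff (ht : maximalIdeal R = Ideal.span {t}) (hn : t ^ n = 0)
    (hmin : ∀ m < n, t ^ m ≠ 0) {j : ℕ} (hj : j ≤ n) {c : R} :
    t ^ j * c = 0 ↔ t ^ (n - j) ∣ c := by
  constructor
  · intro h
    rcases eq_or_ne c 0 with rfl | hc
    · exact dvd_zero _
    obtain ⟨i, u, hile, hu, rfl⟩ := unit_decomp ht hn hc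
    have hti : t ^ (j + i) = 0 := by
      have : t ^ (j + i) * u = 0 := by rw [pow_add]; linear_combination h
      exact hu.mul_left_eq_zero.mp this
    have hge : n ≤ j + i := by
      by_contra hlt
      exact hmin _ (by omega) hti
    exact Dvd.dvd.mul_right ⟨t ^ (i - (n - j)), by rw [← pow_add]; congr 1; omega⟩ u
  · rintro ⟨d, rfl⟩
    rw [← mul_assoc, ← pow_add]
    have : j + (n - j) = n := by omega
    rw [this, hn, zero_mul]

lemma ideal_pow (ht : maximalIdeal R = Ideal.span {t}) (hn : t ^ n = 0)
    [IsPrincipalIdealRing R] (I : Ideal R) : ∃ j ≤ n, I = Ideal.span {t ^ j} := by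
  obtain ⟨a, rfl⟩ := (IsPrincipalIdealRing.principal I).principal
  rcases eq_or_ne a 0 with rfl | ha
  · exact ⟨n, le_rfl, by rw [hn]⟩
  obtain ⟨i, u, hile, hu, rfl⟩ := unit_decomp ht hn ha
  refine ⟨i, hile, ?_⟩
  rw [Ideal.submodule_span_eq, Ideal.span_singleton_mul_right_unit hu]

lemma local_baer (ht : maximalIdeal R = Ideal.span {t}) (hn : t ^ n = 0)
    (hmin : ∀ m < n, t ^ m ≠ 0) [IsPrincipalIdealRing R] : Module.Baer R R := by
  intro I g
  obtain ⟨j, hj, rfl⟩ := ideal_pow ht hn I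
  have htj : (t ^ j : R) ∈ Ideal.span {t ^ j} := Ideal.subset_span rfl
  set c := g ⟨t ^ j, htj⟩ with hc
  have hzero : t ^ (n - j) * c = 0 := by
    have : (t ^ (n - j)) • (⟨t ^ j, htj⟩ : Ideal.span {t ^ j}) = 0 := by
      apply Subtype.ext
      show t ^ (n - j) * t ^ j = 0
      rw [← pow_add]
      have : n - j + j = n := by omega
      rw [this, hn]
    rw [← smul_eq_mul, hc, ← map_smul, this, map_zero]
  have hdvd : t ^ j ∣ c := by
    have := (ann_iff ht hn hmin (j := n - j) (by omega)).mp hzero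
    rwa [Nat.sub_sub_self hj] at this
  obtain ⟨d, hd⟩ := hdvd
  refine ⟨LinearMap.toSpanSingleton R R d, ?_⟩
  intro x hx
  rw [Ideal.mem_span_singleton] at hx
  obtain ⟨y, hy⟩ := hx
  have hxy : (⟨x, hx⟩ : Ideal.span {t ^ j}) = y • ⟨t ^ j, htj⟩ := by
    apply Subtype.ext
    show x = y * t ^ j
    rw [hy]; ring
  rw [hxy, map_smul, ← hc, hd, LinearMap.toSpanSingleton_apply, smul_eq_mul, smul_eq_mul, hy]
  ring

section L2
variable {R : Type u} [CommRing R] [IsLocalRing R]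

lemma local_pack [IsArtinianRing R] [IsPrincipalIdealRing R] :
    ∃ (t : R) (n : ℕ), maximalIdeal R = Ideal.span {t} ∧ t ^ n = 0 ∧ ∀ m < n, t ^ m ≠ 0 := by
  obtain ⟨t, ht⟩ := (IsPrincipalIdealRing.principal (maximalIdeal R)).principal
  rw [Ideal.submodule_span_eq] at ht
  obtain ⟨N, hN⟩ := IsArtinianRing.isNilpotent_jacobson_bot (R := R)
  rw [jacobson_eq_maximalIdeal ⊥ bot_ne_top] at hN
  have htN : t ^ N = 0 := by
    have ht' : t ∈ maximalIdeal R := ht ▸ Ideal.subset_span rfl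
    have := Ideal.pow_mem_pow ht' N
    rw [hN] at this
    simpa using this
  classical
  have hex : ∃ m, t ^ m = 0 := ⟨N, htN⟩
  refine ⟨t, Nat.find hex, ht, Nat.find_spec hex, fun m hm => Nat.find_min hex hm⟩

lemma local_selfinj [IsArtinianRing R] [IsPrincipalIdealRing R] : Module.Injective R R := by
  obtain ⟨t, n, ht, hn, hmin⟩ := local_pack (R := R)
  exact (local_baer ht hn hmin).injective

/-- dual of a cyclic module over a local artinian PIR -/
lemma cyclic_dual [IsArtinianRing R] [IsPrincipalIdealRing R] (a : R) :
    Nonempty ((R ⧸ Ideal.span {a}) ≃ₗ[R] ((R ⧸ Ideal.span {a}) →ₗ[R] R)) := by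
  obtain ⟨t, n, ht, hn, hmin⟩ := local_pack (R := R)
  obtain ⟨j, hj, heq⟩ := ideal_pow ht hn (Ideal.span {a})
  rw [heq]
  have hsum : j + (n - j) = n := by omega
  have hkerG : Ideal.span {t ^ j} ≤ LinearMap.ker (LinearMap.toSpanSingleton R R (t ^ (n - j))) := by
    rw [Ideal.span_le, Set.singleton_subset_iff]
    show t ^ j • t ^ (n - j) = 0
    rw [smul_eq_mul, ← pow_add, hsum, hn]
  set G : (R ⧸ Ideal.span {t ^ j}) →ₗ[R] R :=
    Submodule.liftQ (Ideal.span {t ^ j}) (LinearMap.toSpanSingleton R R (t ^ (n - j))) hkerG with hG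
  have hGapp : ∀ x : R, G (Submodule.Quotient.mk x) = x * t ^ (n - j) := by
    intro x
    rw [hG, Submodule.liftQ_apply, LinearMap.toSpanSingleton_apply, smul_eq_mul]
  set F : R →ₗ[R] ((R ⧸ Ideal.span {t ^ j}) →ₗ[R] R) :=
    LinearMap.toSpanSingleton R _ G with hF
  have hFapp : ∀ r x : R, F r (Submodule.Quotient.mk x) = x * r * t ^ (n - j) := by
    intro r x
    rw [hF, LinearMap.toSpanSingleton_apply, LinearMap.smul_apply, hGapp, smul_eq_mul]
    ring
  have hsurj : Function.Surjective F := by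
    intro f
    set c := f (Submodule.Quotient.mk 1) with hc
    have hzero : t ^ j * c = 0 := by
      have h0 : (Submodule.Quotient.mk (t ^ j) : R ⧸ Ideal.span {t ^ j}) = 0 :=
        (Submodule.Quotient.mk_eq_zero _).mpr (Ideal.subset_span rfl)
      calc t ^ j * c = t ^ j • f (Submodule.Quotient.mk 1) := by rw [smul_eq_mul]
      _ = f (t ^ j • Submodule.Quotient.mk 1) := by rw [map_smul]
      _ = f (Submodule.Quotient.mk (t ^ j)) := by
            congr 1
            rw [← Submodule.Quotient.mk_smul]
            congr 1
            rw [smul_eq_mul, mul_one]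
      _ = 0 := by rw [h0, map_zero]
    obtain ⟨d, hd⟩ := (ann_iff ht hn hmin hj).mp hzero
    refine ⟨d, ?_⟩
    apply Submodule.linearMap_qext
    apply LinearMap.ext_ring
    show F d (Submodule.Quotient.mk 1) = f (Submodule.Quotient.mk 1)
    rw [hFapp, ← hc, hd]
    ring
  have hkerF : LinearMap.ker F = Ideal.span {t ^ j} := by
    ext r
    rw [LinearMap.mem_ker]
    constructor
    · intro h
      have h1 : F r (Submodule.Quotient.mk 1) = 0 := by rw [h]; rfl
      rw [hFapp] at h1
      have h2 : t ^ (n - j) * r = 0 := by linear_combination h1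
      have h3 := (ann_iff ht hn hmin (j := n - j) (by omega)).mp h2
      rw [Nat.sub_sub_self hj] at h3
      rwa [Ideal.mem_span_singleton]
    · intro h
      rw [Ideal.mem_span_singleton] at h
      obtain ⟨y, rfl⟩ := h
      apply Submodule.linearMap_qext
      apply LinearMap.ext_ring
      show F _ (Submodule.Quotient.mk 1) = 0
      rw [hFapp]
      calc (1 : R) * (t ^ j * y) * t ^ (n - j) = y * t ^ (j + (n - j)) := by rw [pow_add]; ring
      _ = 0 := by rw [hsum, hn, mul_zero]
  exact ⟨(Submodule.quotEquivOfEq _ _ hkerF.symm).trans (F.quotKerEquivOfSurjective hsurj)⟩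

end L2

section Split
variable {S : Type u} [Ring S] {M C : Type u} [AddCommGroup M] [Module S M]
  [AddCommGroup C] [Module S C]

/-- a retraction gives a splitting -/
noncomputable def splitEquiv (g : M →ₗ[S] C) (σ : C →ₗ[S] M) (hsec : ∀ c, g (σ c) = c) :
    M ≃ₗ[S] (LinearMap.ker g × C) where
  toFun m := (⟨m - σ (g m), by simp [hsec]⟩, g m)
  invFun p := p.1.1 + σ p.2
  map_add' m m' := by
    ext <;> simp <;> abel
  map_smul' r m := by
    ext <;> simp [smul_sub]
  left_inv m := by simp
  right_inv p := by
    obtain ⟨⟨y, hy⟩, c⟩ := p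
    rw [LinearMap.mem_ker] at hy
    ext <;> simp [hsec, hy]
end Split

lemma quot_cyclic_equiv {R : Type u} [CommRing R] (I : Ideal R) (r0 : R) :
    Nonempty ((((R ⧸ I) ⧸ Ideal.span {(Ideal.Quotient.mk I r0)}) ≃ₗ[R] (R ⧸ (Ideal.span {r0} ⊔ I)))) := by
  set S := R ⧸ I
  set c : S := Ideal.Quotient.mk I r0
  set μ : R →ₗ[R] ((S ⧸ Ideal.span {c})) :=
    ((Ideal.span {c}).mkQ.restrictScalars R) ∘ₗ (Algebra.linearMap R S) with hμ
  have hμapp : ∀ x : R, μ x = Submodule.Quotient.mk (Ideal.Quotient.mk I x) := fun x => rfl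
  have hsurj : Function.Surjective μ := by
    intro z
    obtain ⟨y, rfl⟩ := Submodule.Quotient.mk_surjective _ z
    obtain ⟨x, rfl⟩ := Ideal.Quotient.mk_surjective y
    exact ⟨x, rfl⟩
  have hker : LinearMap.ker μ = (Ideal.span {r0} ⊔ I : Ideal R) := by
    ext x
    rw [LinearMap.mem_ker, hμapp, Submodule.Quotient.mk_eq_zero, Ideal.mem_span_singleton]
    constructor
    · rintro ⟨z, hz⟩
      obtain ⟨a, rfl⟩ := Ideal.Quotient.mk_surjective z
      have : Ideal.Quotient.mk I x = Ideal.Quotient.mk I (a * r0) := by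
        rw [map_mul]; rw [hz]; ring
      rw [Ideal.Quotient.mk_eq_mk_iff_sub_mem] at this
      refine Submodule.mem_sup.mpr ⟨a * r0, ?_, x - a * r0, this, by ring⟩
      exact Ideal.mem_span_singleton.mpr ⟨a, by ring⟩
    · intro hx
      obtain ⟨y, hy, z, hz, rfl⟩ := Submodule.mem_sup.mp hx
      obtain ⟨a, rfl⟩ := Ideal.mem_span_singleton.mp hy
      refine ⟨Ideal.Quotient.mk I a, ?_⟩
      have : Ideal.Quotient.mk I z = 0 := Ideal.Quotient.eq_zero_iff_mem.mpr hz
      rw [map_add, this, add_zero, map_mul]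
  exact ⟨((Submodule.quotEquivOfEq _ _ hker.symm).trans (μ.quotKerEquivOfSurjective hsurj)).symm⟩

/-- linear equivalence between two subsingleton modules -/
def subsingletonLEquiv (R : Type*) [Semiring R] (M N : Type*) [AddCommMonoid M] [AddCommMonoid N]
    [Module R M] [Module R N] [Subsingleton M] [Subsingleton N] : M ≃ₗ[R] N where
  toFun _ := 0
  invFun _ := 0
  map_add' _ _ := Subsingleton.elim _ _
  map_smul' _ _ := Subsingleton.elim _ _
  left_inv _ := Subsingleton.elim _ _
  right_inv _ := Subsingleton.elim _ _

theorem loc_struct (n : ℕ) : ∀ (R : Type u) [CommRing R] [IsArtinianRing R]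
    [IsPrincipalIdealRing R] [IsLocalRing R] (M : Type u) [AddCommGroup M] [Module R M]
    (s : Fin n → M) (_ : Submodule.span R (Set.range s) = ⊤),
    ∃ (ι : Type) (_ : Fintype ι) (a : ι → R),
      Nonempty (M ≃ₗ[R] ((i : ι) → R ⧸ Ideal.span {a i})) := by
  induction n with
  | zero =>
    intro R _ _ _ _ M _ _ s hs
    have : Set.range s = ∅ := Set.range_eq_empty s
    rw [this, Submodule.span_empty] at hs
    have hsub : Subsingleton M := by
      constructor
      intro x y
      have hx : x ∈ (⊥ : Submodule R M) := hs ▸ Submodule.mem_top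
      have hy : y ∈ (⊥ : Submodule R M) := hs ▸ Submodule.mem_top
      rw [Submodule.mem_bot] at hx hy
      rw [hx, hy]
    exact ⟨PEmpty, inferInstance, fun i => 0, ⟨subsingletonLEquiv R M _⟩⟩
  | succ n IH =>
    intro R _ _ _ _ M _ _ s hs
    classical
    obtain ⟨t, nt, ht, hnt, hmin⟩ := local_pack (R := R)
    -- order of an element
    have hOex : ∀ y : M, ∃ j, t ^ j • y = 0 := fun y => ⟨nt, by rw [hnt, zero_smul]⟩
    set o : M → ℕ := fun y => Nat.find (hOex y) with ho
    obtain ⟨i₀, hi₀⟩ := Finite.exists_max (fun i => o (s i))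
    set k := o (s i₀) with hk
    set x := s i₀ with hx
    have hxk : t ^ k • x = 0 := Nat.find_spec (hOex x)
    have hminx : ∀ j < k, t ^ j • x ≠ 0 := fun j hj => Nat.find_min (hOex x) hj
    have hkM : ∀ m : M, t ^ k • m = 0 := by
      have hsub : Submodule.span R (Set.range s) ≤ Submodule.torsionBy R M (t ^ k) := by
        rw [Submodule.span_le]
        rintro _ ⟨i, rfl⟩
        show t ^ k • s i = 0
        have hoik : o (s i) ≤ k := hi₀ i
        have : t ^ k = t ^ (k - o (s i)) * t ^ (o (s i)) := by
          rw [← pow_add]; congr 1; omega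
        rw [this, mul_smul, Nat.find_spec (hOex (s i)), smul_zero]
      intro m
      exact hsub (hs ▸ Submodule.mem_top)
    rcases Nat.eq_zero_or_pos k with hk0 | hkpos
    · -- all elements zero
      have hsub : Subsingleton M := by
        constructor
        intro a b
        have ha := hkM a
        have hb := hkM b
        rw [hk0, pow_zero, one_smul] at ha hb
        rw [ha, hb]
      exact ⟨PEmpty, inferInstance, fun i => 0, ⟨subsingletonLEquiv R M _⟩⟩
    -- the quotient ring
    set S := R ⧸ Ideal.span {t ^ k} with hS
    have hne : Ideal.span {t ^ k} ≠ ⊤ := by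
      intro htop
      have : IsUnit (t ^ k) := Ideal.span_singleton_eq_top.mp htop
      have htm : t ∈ maximalIdeal R := ht ▸ Ideal.subset_span rfl
      have : (t : R) ^ k ∈ maximalIdeal R := by
        have : t ^ k = t ^ (k - 1) * t := by rw [← pow_succ]; congr 1; omega
        rw [this]
        exact Ideal.mul_mem_left _ _ htm
      exact (IsLocalRing.maximalIdeal.isMaximal R).ne_top
        (Ideal.eq_top_of_isUnit_mem _ this ‹IsUnit (t ^ k)›)
    haveI : Nontrivial S := Ideal.Quotient.nontrivial_iff.mpr hne
    haveI : IsLocalRing S := IsLocalRing.of_surjective' (Ideal.Quotient.mk _) Ideal.Quotient.mk_surjective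
    haveI : IsPrincipalIdealRing S := IsPrincipalIdealRing.of_surjective
      (Ideal.Quotient.mk (Ideal.span {t ^ k})) Ideal.Quotient.mk_surjective
    have hTor : Module.IsTorsionBySet R M (Ideal.span {t ^ k}) := by
      intro m r
      obtain ⟨c, hc⟩ := Ideal.mem_span_singleton'.mp r.2
      show (r : R) • m = 0
      rw [← hc, mul_smul, hkM, smul_zero]
    letI : Module S M := hTor.module
    haveI : IsScalarTower R S M := hTor.isScalarTower
    have hmk_smul : ∀ (b : R) (m : M), (Ideal.Quotient.mk (Ideal.span {t ^ k}) b) • m = b • m :=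
      fun b m => hTor.mk_smul b m
    -- the span over S is everything
    have hsS : Submodule.span S (Set.range s) = ⊤ := by
      rw [eq_top_iff]
      intro m _
      have hm : m ∈ Submodule.span R (Set.range s) := hs ▸ Submodule.mem_top
      exact Submodule.span_le_restrictScalars R S (Set.range s) hm
    -- x generates a free cyclic S-submodule
    set f : S →ₗ[S] M := LinearMap.toSpanSingleton S M x with hf
    have hfinj : Function.Injective f := by
      rw [injective_iff_map_eq_zero]
      intro γ hγ
      obtain ⟨r, rfl⟩ := Ideal.Quotient.mk_surjective γ
      rw [hf, LinearMap.toSpanSingleton_apply, hmk_smul] at hγ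
      rcases eq_or_ne r 0 with rfl | hr
      · simp
      obtain ⟨i, u, hile, hu, rfl⟩ := unit_decomp ht hnt hr
      rw [Ideal.Quotient.eq_zero_iff_mem, Ideal.mem_span_singleton]
      have hti : t ^ i • x = 0 := by
        have : (t ^ i * u) • x = u • (t ^ i • x) := by rw [mul_comm, mul_smul]
        rw [this] at hγ
        obtain ⟨v, hv⟩ := hu
        have := congrArg (fun z => (↑v⁻¹ : R) • z) hγ
        simpa [← hv, smul_smul, smul_zero] using this
      have hik : k ≤ i := by
        by_contra hlt
        exact hminx i (by omega) hti
      exact ⟨t ^ (i - k) * u, by rw [← mul_assoc, ← pow_add]; congr 2; omega⟩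
    -- extend the identity along f using self-injectivity of S
    obtain ⟨h, hh⟩ := (local_selfinj (R := S)).out f hfinj LinearMap.id
    have hhf : ∀ c : S, h (f c) = c := fun c => hh c
    -- split M
    have e1 : M ≃ₗ[S] (LinearMap.ker h × S) := splitEquiv h f hhf
    -- generators for the kernel
    set q : M →ₗ[S] M := LinearMap.id - f ∘ₗ h with hq
    have hqapp : ∀ m : M, q m = m - (h m) • x := by
      intro m
      rw [hq, LinearMap.sub_apply, LinearMap.id_apply, LinearMap.comp_apply, hf,
        LinearMap.toSpanSingleton_apply]
    have hqmem : ∀ m : M, q m ∈ LinearMap.ker h := by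
      intro m
      rw [LinearMap.mem_ker, hqapp, map_sub, map_smul]
      have : h x = 1 := by
        have := hhf 1
        rwa [hf, LinearMap.toSpanSingleton_apply, one_smul] at this
      rw [this, smul_eq_mul, mul_one, sub_self]
    set p : M →ₗ[S] LinearMap.ker h := LinearMap.codRestrict (LinearMap.ker h) q hqmem with hp
    have hpapp : ∀ m : M, (p m : M) = m - (h m) • x := fun m => hqapp m
    set s' : Fin n → LinearMap.ker h := fun i => p (s (i₀.succAbove i)) with hs'
    have hs'span : Submodule.span S (Set.range s') = ⊤ := by
      rw [eq_top_iff]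
      rintro ⟨z, hz⟩ _
      have hzmem : z ∈ Submodule.span S (Set.range s) := hsS ▸ Submodule.mem_top
      have key : ∀ m ∈ Submodule.span S (Set.range s), p m ∈ Submodule.span S (Set.range s') := by
        intro m hm
        induction hm using Submodule.span_induction with
        | mem y hy =>
          obtain ⟨i, rfl⟩ := hy
          rcases eq_or_ne i i₀ with rfl | hne
          · have : p (s i) = 0 := by
              apply Subtype.ext
              rw [hpapp]
              show x - h x • x = 0
              have : h x = 1 := by
                have := hhf 1
                rwa [hf, LinearMap.toSpanSingleton_apply, one_smul] at this
              rw [this, one_smul, sub_self]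
            rw [this]; exact Submodule.zero_mem _
          · obtain ⟨j, rfl⟩ := Fin.exists_succAbove_eq hne
            exact Submodule.subset_span ⟨j, rfl⟩
        | zero => rw [map_zero]; exact Submodule.zero_mem _
        | add y z _ _ hy hz => rw [map_add]; exact Submodule.add_mem _ hy hz
        | smul r y _ hy => rw [map_smul]; exact Submodule.smul_mem _ _ hy
      have hpz : p z = ⟨z, hz⟩ := by
        apply Subtype.ext
        rw [hpapp]
        rw [LinearMap.mem_ker] at hz
        rw [hz, zero_smul, sub_zero]
      have := key z hzmem
      rwa [hpz] at this
    -- apply the induction hypothesis over S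
    obtain ⟨ι, hι, b, ⟨e2⟩⟩ := IH S (LinearMap.ker h) s' hs'span
    -- now assemble
    have e3 : M ≃ₗ[S] (((i : ι) → S ⧸ Ideal.span {b i}) × S) :=
      e1.trans (LinearEquiv.prodCongr e2 (LinearEquiv.refl S S))
    have e4 : M ≃ₗ[R] (((i : ι) → S ⧸ Ideal.span {b i}) × S) :=
      e3.restrictScalars R
    -- replace each cyclic S-piece by a cyclic R-piece
    have hcyc : ∀ i : ι, ∃ d : R, Nonempty ((S ⧸ Ideal.span {b i}) ≃ₗ[R] (R ⧸ Ideal.span {d})) := by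
      intro i
      obtain ⟨r0, hr0⟩ := Ideal.Quotient.mk_surjective (b i)
      obtain ⟨d, hd⟩ := (IsPrincipalIdealRing.principal (Ideal.span {r0} ⊔ Ideal.span {t ^ k})).principal
      rw [Ideal.submodule_span_eq] at hd
      obtain ⟨e⟩ := quot_cyclic_equiv (Ideal.span {t ^ k}) r0
      rw [hr0, hd] at e
      exact ⟨d, ⟨e⟩⟩
    choose d hd using hcyc
    set dfam : ι → (Σ' _ : Unit, Unit) → _ := fun _ _ => ()
    have e5 : (((i : ι) → S ⧸ Ideal.span {b i}) × S) ≃ₗ[R]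
        (((i : ι) → R ⧸ Ideal.span {d i}) × (R ⧸ Ideal.span {t ^ k})) :=
      LinearEquiv.prodCongr (LinearEquiv.piCongrRight (fun i => Classical.choice (hd i)))
        (LinearEquiv.refl R S)
    -- repackage over Option ι
    set a : Option ι → R := fun oi => Option.elim oi (t ^ k) d with ha
    have e6 : (((i : Option ι) → R ⧸ Ideal.span {a i})) ≃ₗ[R]
        ((R ⧸ Ideal.span {t ^ k}) × ((i : ι) → R ⧸ Ideal.span {d i})) :=
      LinearEquiv.piOptionEquivProd R
    exact ⟨Option ι, inferInstance, a,
      ⟨e4.trans (e5.trans ((LinearEquiv.prodComm _ _ _).trans e6.symm))⟩⟩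

theorem local_main (R : Type u) [CommRing R] [IsArtinianRing R] [IsPrincipalIdealRing R]
    [IsLocalRing R] (M : Type u) [AddCommGroup M] [Module R M] [Module.Finite R M] :
    Nonempty (M ≃ₗ[R] (M →ₗ[R] R)) := by
  classical
  obtain ⟨n, s, hs⟩ := Module.Finite.exists_fin (R := R) (M := M)
  obtain ⟨ι, hι, a, ⟨e⟩⟩ := loc_struct n R M s hs
  set C : ι → Type u := fun i => R ⧸ Ideal.span {a i} with hC
  have duals : (i : ι) → (C i ≃ₗ[R] (C i →ₗ[R] R)) := fun i => Classical.choice (cyclic_dual (a i))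
  have e2 : ((i : ι) → C i) ≃ₗ[R] ((i : ι) → (C i →ₗ[R] R)) :=
    LinearEquiv.piCongrRight duals
  have e3 : ((i : ι) → (C i →ₗ[R] R)) ≃ₗ[R] (((i : ι) → C i) →ₗ[R] R) :=
    LinearMap.lsum R C R
  have e4 : (((i : ι) → C i) →ₗ[R] R) ≃ₗ[R] (M →ₗ[R] R) :=
    LinearEquiv.arrowCongr e.symm (LinearEquiv.refl R R)
  exact ⟨e.trans (e2.trans (e3.trans e4))⟩

/-- Component lemma: if N is an fg R-module killed by J, with a complementary idempotent-like
element ej, and the duality theorem holds over R/J, then N is R-isomorphic to its R-dual. -/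
theorem component_dual {R : Type u} [CommRing R] (J : Ideal R) (ej : R)
    (hej1 : 1 - ej ∈ J) (hej2 : ∀ a ∈ J, a * ej = 0)
    (N : Type u) [AddCommGroup N] [Module R N] [Module.Finite R N]
    (hTor : Module.IsTorsionBySet R N J)
    (hquot : ∀ (M' : Type u) [AddCommGroup M'] [Module (R ⧸ J) M'] [Module.Finite (R ⧸ J) M'],
       Nonempty (M' ≃ₗ[R ⧸ J] (M' →ₗ[R ⧸ J] (R ⧸ J)))) :
    Nonempty (N ≃ₗ[R] (N →ₗ[R] R)) := by
  classical
  letI : Module (R ⧸ J) N := hTor.module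
  haveI : IsScalarTower R (R ⧸ J) N := hTor.isScalarTower
  haveI : Module.Finite (R ⧸ J) N := Module.Finite.of_restrictScalars_finite R (R ⧸ J) N
  have hmk_smul : ∀ (b : R) (m : N), (Ideal.Quotient.mk J b) • m = b • m :=
    fun b m => hTor.mk_smul b m
  obtain ⟨eDq⟩ := hquot N
  have hkill : ∀ (f : N →ₗ[R] R) (a : R), a ∈ J → ∀ x : N, a • f x = 0 := by
    intro f a ha x
    have : a • x = (0 : N) := @hTor x ⟨a, ha⟩
    rw [← map_smul, this, map_zero]
  have hTor' : Module.IsTorsionBySet R (N →ₗ[R] R) J := by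
    intro f a
    apply LinearMap.ext
    intro x
    show (a : R) • f x = 0
    exact hkill f a a.2 x
  letI : Module (R ⧸ J) (N →ₗ[R] R) := hTor'.module
  haveI : IsScalarTower R (R ⧸ J) (N →ₗ[R] R) := hTor'.isScalarTower
  have hmk_smul' : ∀ (b : R) (f : N →ₗ[R] R), (Ideal.Quotient.mk J b) • f = b • f :=
    fun b f => hTor'.mk_smul b f
  -- the section of the quotient map given by multiplication by ej
  have hσker : J ≤ LinearMap.ker (LinearMap.toSpanSingleton R R ej) := by
    intro a ha
    rw [LinearMap.mem_ker, LinearMap.toSpanSingleton_apply, smul_eq_mul]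
    exact hej2 a ha
  set σ : (R ⧸ J) →ₗ[R] R := Submodule.liftQ J (LinearMap.toSpanSingleton R R ej) hσker with hσ
  have hσapp : ∀ r : R, σ (Ideal.Quotient.mk J r) = r * ej := by
    intro r
    show σ (Submodule.Quotient.mk r) = r * ej
    rw [hσ, Submodule.liftQ_apply, LinearMap.toSpanSingleton_apply, smul_eq_mul]
  have hmkej : Ideal.Quotient.mk J ej = 1 := by
    rw [← map_one (Ideal.Quotient.mk J), Ideal.Quotient.mk_eq_mk_iff_sub_mem]
    simpa using (neg_mem hej1 : -(1 - ej) ∈ J)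
  -- Ψ: from R-dual to (R/J)-dual
  set Ψ : (N →ₗ[R] R) → (N →ₗ[R ⧸ J] (R ⧸ J)) := fun f =>
    { toFun := fun x => Ideal.Quotient.mk J (f x)
      map_add' := fun x y => by
        show Ideal.Quotient.mk J (f (x + y)) = Ideal.Quotient.mk J (f x) + Ideal.Quotient.mk J (f y)
        rw [map_add, map_add]
      map_smul' := fun γ x => by
        obtain ⟨r, rfl⟩ := Ideal.Quotient.mk_surjective γ
        show Ideal.Quotient.mk J (f ((Ideal.Quotient.mk J r) • x)) = _
        rw [hmk_smul, map_smul, smul_eq_mul, map_mul]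
        rfl } with hΨdef
  have hΨapp : ∀ (f : N →ₗ[R] R) (x : N), Ψ f x = Ideal.Quotient.mk J (f x) := by
    intro f x; rw [hΨdef]; rfl
  set Φ : (N →ₗ[R ⧸ J] (R ⧸ J)) → (N →ₗ[R] R) := fun g => σ ∘ₗ (g.restrictScalars R) with hΦdef
  have hΦapp : ∀ (g : N →ₗ[R ⧸ J] (R ⧸ J)) (x : N), Φ g x = σ (g x) := by
    intro g x; rw [hΦdef]; rfl
  set D : (N →ₗ[R] R) ≃ₗ[R ⧸ J] (N →ₗ[R ⧸ J] (R ⧸ J)) :=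
    { toFun := Ψ
      invFun := Φ
      map_add' := fun f g => by
        apply LinearMap.ext
        intro x
        rw [LinearMap.add_apply, hΨapp, LinearMap.add_apply, hΨapp, hΨapp, map_add]
      map_smul' := fun γ f => by
        obtain ⟨r, rfl⟩ := Ideal.Quotient.mk_surjective γ
        apply LinearMap.ext
        intro x
        rw [RingHom.id_apply, hmk_smul']
        rw [LinearMap.smul_apply]
        rw [hΨapp, hΨapp, LinearMap.smul_apply, smul_eq_mul, map_mul]
        rw [smul_eq_mul]
      left_inv := fun f => by
        apply LinearMap.ext
        intro x
        rw [hΦapp]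
        obtain ⟨r, hr⟩ := Ideal.Quotient.mk_surjective (Ψ f x)
        rw [hΨapp] at hr ⊢
        rw [hσapp (f x)]
        have h1 : (1 - ej) • f x = 0 := hkill f _ hej1 x
        rw [sub_smul, one_smul, smul_eq_mul, sub_eq_zero] at h1
        rw [mul_comm] at h1
        exact h1.symm
      right_inv := fun g => by
        apply LinearMap.ext
        intro x
        rw [hΨapp, hΦapp]
        obtain ⟨r, hr⟩ := Ideal.Quotient.mk_surjective (g x)
        rw [← hr, hσapp, map_mul, hmkej, mul_one] } with hD
  exact ⟨LinearEquiv.restrictScalars R (eDq.trans D.symm)⟩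

lemma maxSet_finite {R : Type u} [CommRing R] [IsArtinianRing R] :
    {I : Ideal R | I.IsMaximal}.Finite :=
  IsArtinianRing.setOfPred_isMaximal_finite (R := R)

lemma inf_eq_prod_of_coprime {R : Type u} [CommRing R] {ι : Type*} (s : Finset ι)
    (f : ι → Ideal R) (h : ∀ i ∈ s, ∀ j ∈ s, i ≠ j → IsCoprime (f i) (f j)) :
    s.inf f = s.prod f := by
  classical
  induction s using Finset.induction_on with
  | empty => simp [Ideal.one_eq_top]
  | @insert a s ha ih =>
    have hcop : IsCoprime (f a) (s.prod f) := IsCoprime.prod_right (fun j hj =>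
      h a (Finset.mem_insert_self a s) j (Finset.mem_insert_of_mem hj)
        (by rintro rfl; exact ha hj))
    rw [Finset.inf_insert, Finset.prod_insert ha,
      ih (fun i hi j hj hij => h i (Finset.mem_insert_of_mem hi) j (Finset.mem_insert_of_mem hj) hij),
      Ideal.inf_eq_mul_of_isCoprime hcop]

theorem global_main (s : ℕ) : ∀ (R : Type u) [CommRing R] [IsArtinianRing R]
    [IsPrincipalIdealRing R], ({I : Ideal R | I.IsMaximal}).ncard ≤ s →
    ∀ (M : Type u) [AddCommGroup M] [Module R M] [Module.Finite R M],
    Nonempty (M ≃ₗ[R] (M →ₗ[R] R)) := by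
  induction s with
  | zero =>
    intro R _ _ _ hcard M _ _ _
    have hsub : Subsingleton R := by
      by_contra hns
      rw [not_subsingleton_iff_nontrivial] at hns
      obtain ⟨m, hm⟩ := Ideal.exists_maximal R
      have hfin := maxSet_finite (R := R)
      have : 0 < ({I : Ideal R | I.IsMaximal}).ncard := (Set.ncard_pos hfin).mpr ⟨m, hm⟩
      omega
    have hMsub : Subsingleton M := by
      constructor
      intro a b
      have h10 : (1 : R) = 0 := Subsingleton.elim _ _
      have hz : ∀ c : M, c = 0 := fun c => by
        calc c = (1 : R) • c := (one_smul R c).symm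
        _ = (0 : R) • c := by rw [h10]
        _ = 0 := zero_smul R c
      rw [hz a, hz b]
    haveI : Subsingleton (M →ₗ[R] R) :=
      ⟨fun f g => LinearMap.ext fun x => Subsingleton.elim _ _⟩
    exact ⟨subsingletonLEquiv R M _⟩
  | succ s IH =>
    intro R _ _ _ hcard M _ _ _
    classical
    by_cases hle : ({I : Ideal R | I.IsMaximal}).ncard ≤ s
    · exact IH R hle M
    have hn : ({I : Ideal R | I.IsMaximal}).ncard = s + 1 := le_antisymm hcard (by omega)
    have hfin := maxSet_finite (R := R)
    have hmax_ne : {I : Ideal R | I.IsMaximal}.Nonempty := by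
      rw [← Set.ncard_pos hfin]; omega
    obtain ⟨m1, hm1⟩ := hmax_ne
    by_cases huniq : ∀ I : Ideal R, I.IsMaximal → I = m1
    · haveI : IsLocalRing R := IsLocalRing.of_unique_max_ideal ⟨m1, hm1, huniq⟩
      exact local_main R M
    push_neg at huniq
    obtain ⟨m2, hm2, hm2ne⟩ := huniq
    obtain ⟨N0, hN0⟩ := IsArtinianRing.isNilpotent_jacobson_bot (R := R)
    set N := N0 + 1 with hNdef
    have hN : (Ideal.jacobson (⊥ : Ideal R)) ^ N = ⊥ := by
      rw [hNdef, pow_succ, hN0]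
      exact bot_mul _
    have hNne : N ≠ 0 := by omega
    have hjac : Ideal.jacobson (⊥ : Ideal R) = sInf {I : Ideal R | I.IsMaximal} := by
      rw [Ideal.jacobson]
      congr 1
      ext I
      simp
    set FS := hfin.toFinset with hFS
    have hmemFS : ∀ {I : Ideal R}, I ∈ FS ↔ I.IsMaximal := fun {I} => hfin.mem_toFinset
    have hm1FS : m1 ∈ FS := hmemFS.mpr hm1
    have hFScard : FS.card = s + 1 := by
      rw [← hn, Set.ncard_eq_toFinset_card _ hfin]
    have hposs : 1 ≤ s := by
      have h2 : 1 < ({I : Ideal R | I.IsMaximal}).ncard := (Set.one_lt_ncard hfin).mpr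
        ⟨m2, hm2, m1, hm1, hm2ne⟩
      omega
    have hcop : ∀ I ∈ FS, ∀ J ∈ FS, I ≠ J → IsCoprime (I ^ N) (J ^ N) := by
      intro I hI J hJ hne
      exact ((Ideal.isCoprime_iff_sup_eq).mpr
        ((hmemFS.mp hI).coprime_of_ne (hmemFS.mp hJ) hne)).pow
    have key0 : FS.inf (fun m => m ^ N) = ⊥ := by
      rw [inf_eq_prod_of_coprime FS _ hcop]
      have h1 : FS.prod (fun m => m ^ N) = (FS.prod id) ^ N := by
        rw [← Finset.prod_pow]
        rfl
      rw [h1]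
      have h2 : FS.prod id ≤ Ideal.jacobson ⊥ := by
        calc FS.prod id ≤ FS.inf id := Ideal.prod_le_inf
        _ = sInf ↑FS := Finset.inf_id_eq_sInf _
        _ = sInf {I : Ideal R | I.IsMaximal} := by rw [hfin.coe_toFinset]
        _ = Ideal.jacobson ⊥ := hjac.symm
      have h3 := Ideal.pow_right_mono h2 N
      rw [hN] at h3
      exact le_bot_iff.mp h3
    set A := m1 ^ N with hA
    set B := (FS.erase m1).inf (fun m => m ^ N) with hB
    have hABinf : A ⊓ B = ⊥ := by
      apply le_bot_iff.mp
      rw [← key0, ← Finset.insert_erase hm1FS, Finset.inf_insert]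
    have hple : ∀ (P I : Ideal R), P.IsPrime → I ^ N ≤ P → I ≤ P := by
      intro P I hP h
      calc I ≤ Ideal.radical I := Ideal.le_radical
      _ = Ideal.radical (I ^ N) := (Ideal.radical_pow (I := I) hNne).symm
      _ ≤ Ideal.radical P := Ideal.radical_mono h
      _ = P := hP.radical
    have hABsup : A ⊔ B = ⊤ := by
      by_contra hne
      obtain ⟨m', hm', hle'⟩ := Ideal.exists_le_maximal _ hne
      have h1 : m1 ≤ m' := hple m' m1 hm'.isPrime (le_trans le_sup_left hle')
      have hm'm1 : m' = m1 := (hm1.eq_of_le hm'.ne_top h1).symm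
      have h2 : B ≤ m' := le_trans le_sup_right hle'
      obtain ⟨m, hmFS, hmle⟩ := (hm'.isPrime.inf_le').mp h2
      have hmm' : m ≤ m' := hple m' m hm'.isPrime hmle
      have hmmax : m.IsMaximal := hmemFS.mp (Finset.mem_of_mem_erase hmFS)
      have : m = m' := hmmax.eq_of_le hm'.ne_top hmm'
      rw [hm'm1] at this
      exact (Finset.mem_erase.mp hmFS).1 this
    have h1mem : (1 : R) ∈ A ⊔ B := hABsup ▸ Submodule.mem_top
    obtain ⟨α, hα, β, hβ, hαβ⟩ := Submodule.mem_sup.mp h1mem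
    have hprod0 : ∀ a ∈ A, ∀ b ∈ B, a * b = 0 := by
      intro a ha b hb
      have hmem : a * b ∈ A ⊓ B := ⟨Ideal.mul_mem_right b A ha, Ideal.mul_mem_left B a hb⟩
      rw [hABinf] at hmem
      simpa using hmem
    -- the two torsion pieces
    set MA := Submodule.torsionBySet R M (A : Set R) with hMA
    set MB := Submodule.torsionBySet R M (B : Set R) with hMB
    have hMAmem : ∀ (x : M), x ∈ MA ↔ ∀ a ∈ A, a • x = 0 := by
      intro x
      rw [hMA, Submodule.mem_torsionBySet_iff]
      exact ⟨fun h a ha => h ⟨a, ha⟩, fun h a => h a a.2⟩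
    have hMBmem : ∀ (x : M), x ∈ MB ↔ ∀ b ∈ B, b • x = 0 := by
      intro x
      rw [hMB, Submodule.mem_torsionBySet_iff]
      exact ⟨fun h a ha => h ⟨a, ha⟩, fun h a => h a a.2⟩
    have hβA : ∀ m : M, β • m ∈ MA := by
      intro m
      rw [hMAmem]
      intro a ha
      rw [smul_smul, hprod0 a ha β hβ, zero_smul]
    have hαB : ∀ m : M, α • m ∈ MB := by
      intro m
      rw [hMBmem]
      intro b hb
      rw [smul_smul, mul_comm, hprod0 α hα b hb, zero_smul]
    have hMAfix : ∀ x : M, x ∈ MA → β • x = x := by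
      intro x hx
      have hax : α • x = 0 := (hMAmem x).mp hx α hα
      have : (α + β) • x = x := by rw [hαβ, one_smul]
      rw [add_smul, hax, zero_add] at this
      exact this
    have hMBfix : ∀ x : M, x ∈ MB → α • x = x := by
      intro x hx
      have hbx : β • x = 0 := (hMBmem x).mp hx β hβ
      have : (α + β) • x = x := by rw [hαβ, one_smul]
      rw [add_smul, hbx, add_zero] at this
      exact this
    have hMAkillβ : ∀ x : M, x ∈ MB → β • x = 0 := fun x hx => (hMBmem x).mp hx β hβ
    have hMBkillα : ∀ x : M, x ∈ MA → α • x = 0 := fun x hx => (hMAmem x).mp hx α hα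
    -- splitting
    set hsplit : M ≃ₗ[R] (MA × MB) :=
      { toFun := fun m => (⟨β • m, hβA m⟩, ⟨α • m, hαB m⟩)
        invFun := fun p => (p.1 : M) + (p.2 : M)
        map_add' := fun m m' => by
          ext
          · show β • (m + m') = β • m + β • m'
            rw [smul_add]
          · show α • (m + m') = α • m + α • m'
            rw [smul_add]
        map_smul' := fun r m => by
          ext
          · show β • (r • m) = r • (β • m)
            rw [smul_comm]
          · show α • (r • m) = r • (α • m)
            rw [smul_comm]
        left_inv := fun m => by
          show β • m + α • m = m
          rw [← add_smul, add_comm β α, hαβ, one_smul]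
        right_inv := fun p => by
          obtain ⟨⟨u, hu⟩, ⟨v, hv⟩⟩ := p
          ext
          · show β • (u + v) = u
            rw [smul_add, hMAfix u hu, hMAkillβ v hv, add_zero]
          · show α • (u + v) = v
            rw [smul_add, hMBfix v hv, hMBkillα u hu, zero_add] } with hsplitdef
    -- MA and MB are finite
    have hπA : Function.Surjective (LinearMap.codRestrict MA (LinearMap.lsmul R M β)
        (fun m => hβA m)) := by
      rintro ⟨x, hx⟩
      exact ⟨x, Subtype.ext (hMAfix x hx)⟩
    have hπB : Function.Surjective (LinearMap.codRestrict MB (LinearMap.lsmul R M α)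
        (fun m => hαB m)) := by
      rintro ⟨x, hx⟩
      exact ⟨x, Subtype.ext (hMBfix x hx)⟩
    haveI : Module.Finite R MA := Module.Finite.of_surjective _ hπA
    haveI : Module.Finite R MB := Module.Finite.of_surjective _ hπB
    -- torsion hypotheses
    have hTorA : Module.IsTorsionBySet R MA A := by
      intro x a
      apply Subtype.ext
      show (a : R) • (x : M) = 0
      exact (hMAmem x).mp x.2 a a.2
    have hTorB : Module.IsTorsionBySet R MB B := by
      intro x a
      apply Subtype.ext
      show (a : R) • (x : M) = 0
      exact (hMBmem x).mp x.2 a a.2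
    -- cardinality bounds for the quotients
    have hcount : ∀ (K : Ideal R) (T : Finset (Ideal R)),
        (∀ m' : Ideal R, m'.IsMaximal → K ≤ m' → m' ∈ T) →
        ({I : Ideal (R ⧸ K) | I.IsMaximal}).ncard ≤ T.card := by
      intro K T hT
      have hmap : ∀ I ∈ {I : Ideal (R ⧸ K) | I.IsMaximal},
          Ideal.comap (Ideal.Quotient.mk K) I ∈ (↑T : Set (Ideal R)) := by
        intro I hI
        have hmax : (Ideal.comap (Ideal.Quotient.mk K) I).IsMaximal :=
          Ideal.comap_isMaximal_of_surjective _ Ideal.Quotient.mk_surjective (H := hI)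
        have hKle : K ≤ Ideal.comap (Ideal.Quotient.mk K) I := by
          intro k hk
          show Ideal.Quotient.mk K k ∈ I
          rw [Ideal.Quotient.eq_zero_iff_mem.mpr hk]
          exact I.zero_mem
        exact Finset.mem_coe.mpr (hT _ hmax hKle)
      have hinj : Set.InjOn (fun I => Ideal.comap (Ideal.Quotient.mk K) I)
          {I : Ideal (R ⧸ K) | I.IsMaximal} :=
        (Ideal.comap_injective_of_surjective _ Ideal.Quotient.mk_surjective).injOn
      have := Set.ncard_le_ncard_of_injOn _ hmap hinj (T.finite_toSet)
      rwa [Set.ncard_coe_finset] at this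
    have hcardA : ({I : Ideal (R ⧸ A) | I.IsMaximal}).ncard ≤ s := by
      have h1 := hcount A {m1} (fun m' hm' hle => by
        have hm1le : m1 ≤ m' := hple m' m1 hm'.isPrime hle
        rw [Finset.mem_singleton]
        exact (hm1.eq_of_le hm'.ne_top hm1le).symm)
      simp only [Finset.card_singleton] at h1
      omega
    have hcardB : ({I : Ideal (R ⧸ B) | I.IsMaximal}).ncard ≤ s := by
      have h1 := hcount B (FS.erase m1) (fun m' hm' hle => by
        obtain ⟨m, hmFS, hmle⟩ := (hm'.isPrime.inf_le').mp hle
        have hmm' : m ≤ m' := hple m' m hm'.isPrime hmle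
        have hmmax : m.IsMaximal := hmemFS.mp (Finset.mem_of_mem_erase hmFS)
        have heq : m = m' := hmmax.eq_of_le hm'.ne_top hmm'
        rw [← heq]
        exact hmFS)
      rw [Finset.card_erase_of_mem hm1FS, hFScard] at h1
      omega
    -- instances on the quotient rings
    haveI : IsPrincipalIdealRing (R ⧸ A) :=
      IsPrincipalIdealRing.of_surjective (Ideal.Quotient.mk A) Ideal.Quotient.mk_surjective
    haveI : IsPrincipalIdealRing (R ⧸ B) :=
      IsPrincipalIdealRing.of_surjective (Ideal.Quotient.mk B) Ideal.Quotient.mk_surjective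
    -- apply the component lemma
    have hej1A : 1 - β ∈ A := by
      have : 1 - β = α := by rw [← hαβ]; ring
      rw [this]; exact hα
    have hej2A : ∀ a ∈ A, a * β = 0 := fun a ha => hprod0 a ha β hβ
    have hej1B : 1 - α ∈ B := by
      have : 1 - α = β := by rw [← hαβ]; ring
      rw [this]; exact hβ
    have hej2B : ∀ b ∈ B, b * α = 0 := fun b hb => by
      rw [mul_comm]; exact hprod0 α hα b hb
    obtain ⟨eA⟩ := component_dual A β hej1A hej2A MA hTorA
      (fun M' _ _ _ => IH (R ⧸ A) hcardA M')
    obtain ⟨eB⟩ := component_dual B α hej1B hej2B MB hTorB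
      (fun M' _ _ _ => IH (R ⧸ B) hcardB M')
    -- assemble
    have e2 : (M →ₗ[R] R) ≃ₗ[R] ((MA →ₗ[R] R) × (MB →ₗ[R] R)) :=
      (LinearEquiv.arrowCongr hsplit (LinearEquiv.refl R R)).trans
        (LinearMap.coprodEquiv R).symm
    exact ⟨hsplit.trans ((LinearEquiv.prodCongr eA eB).trans e2.symm)⟩

/-- Let `R` be a commutative artinian principal ideal ring and `M` a finitely generated
`R`-module. Then `M` is isomorphic as an `R`-module to `Hom_R(M, R)`. -/
theorem artinian_pir_module_iso_dual (R M : Type*) [CommRing R] [IsArtinianRing R]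
    [IsPrincipalIdealRing R] [AddCommGroup M] [Module R M] [Module.Finite R M] :
    Nonempty (M ≃ₗ[R] (M →ₗ[R] R)) := by
  obtain ⟨n, f, hf⟩ := Module.Finite.exists_fin' R M
  set M₀ := (Fin n → R) ⧸ LinearMap.ker f with hM₀
  have e0 : M₀ ≃ₗ[R] M := f.quotKerEquivOfSurjective hf
  haveI : Module.Finite R M₀ :=
    Module.Finite.of_surjective (LinearMap.ker f).mkQ (Submodule.mkQ_surjective _)
  obtain ⟨e1⟩ := global_main ({I : Ideal R | I.IsMaximal}).ncard R le_rfl M₀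
  exact ⟨(e0.symm.trans e1).trans (LinearEquiv.arrowCongr e0 (LinearEquiv.refl R R))⟩
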